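/- Let H be a finite simple graph that is not a base graph, with weight functions w, s : V(H) → ℕ satisfying w(v) ≤ s(v) for all v, type partition {V_1,...,V_t} and type graph H'. Define w'(x) = min_{v∈V_x}( w(v) + Σ_{u∈V_x, u≠v} s(u) ) if V_x induces a clique and w'(x) = Σ_{u∈V_x} w(u) otherwise, and s'(x) = Σ_{u∈V_x} s(u). If C' is a vertex cover of H' minimizing Σ_{x∈C'} s'(x) + Σ_{x∉C'} w'(x), then the set C ⊆ V(H) consisting of all of V_x for every x ∈ C', together with V_x \ {v_x} for every clique class x ∉ C' (where v_x is a vertex of V_x maximizing s(u) − w(u)), is a vertex cover of H minimizing Σ_{v∈C} s(v) + Σ_{v∉C} w(v); i.e., C is an optimal 2-weighted vertex cover of (H, w, s). -/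

import Mathlib

open scoped Classical

open scoped Classical

/-- Two vertices have the same type iff `N(v) \ {u} = N(u) \ {v}`. -/
def sameType {V : Type*} (G : SimpleGraph V) (u v : V) : Prop :=
  G.neighborSet v \ {u} = G.neighborSet u \ {v}

theorem sameType_equivalence {V : Type*} (G : SimpleGraph V) : Equivalence (sameType G) := by
  constructor
  · intro u; rfl
  · intro u v h; exact h.symm
  · intro u v w h1 h2
    have h1' : ∀ x : V, (G.Adj v x ∧ x ≠ u) ↔ (G.Adj u x ∧ x ≠ v) := by
      intro x
      have := Set.ext_iff.mp h1 x
      simpa [Set.mem_diff, SimpleGraph.mem_neighborSet, Set.mem_singleton_iff] using this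
    have h2' : ∀ x : V, (G.Adj w x ∧ x ≠ v) ↔ (G.Adj v x ∧ x ≠ w) := by
      intro x
      have := Set.ext_iff.mp h2 x
      simpa [Set.mem_diff, SimpleGraph.mem_neighborSet, Set.mem_singleton_iff] using this
    ext x
    simp only [Set.mem_diff, SimpleGraph.mem_neighborSet, Set.mem_singleton_iff]
    by_cases hxv : x = v
    · subst hxv
      by_cases huw : w = u
      · subst huw; tauto
      · constructor
        · rintro ⟨hadj, hxu⟩
          have h3 : G.Adj u w ∧ w ≠ x := (h1' w).mp ⟨hadj.symm, huw⟩
          have h5 : G.Adj x u ∧ u ≠ w := (h2' u).mp ⟨h3.1.symm, Ne.symm hxu⟩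
          exact ⟨h5.1.symm, hadj.ne'⟩
        · rintro ⟨hadj, hxw⟩
          have h5 : G.Adj w u ∧ u ≠ x := (h2' u).mpr ⟨hadj.symm, Ne.symm huw⟩
          have h3 : G.Adj x w ∧ w ≠ u := (h1' w).mpr ⟨h5.1.symm, Ne.symm hxw⟩
          exact ⟨h3.1.symm, Ne.symm h5.2⟩
    · constructor
      · rintro ⟨hadj, hxu⟩
        have t1 := (h2' x).mp ⟨hadj, hxv⟩
        have t2 := (h1' x).mp ⟨t1.1, hxu⟩
        exact ⟨t2.1, t1.2⟩
      · rintro ⟨hadj, hxw⟩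
        have t1 := (h1' x).mpr ⟨hadj, hxv⟩
        have t2 := (h2' x).mpr ⟨t1.1, hxw⟩
        exact ⟨t2.1, t1.2⟩

/-- The setoid of the same-type relation. -/
def typeSetoid {V : Type*} (G : SimpleGraph V) : Setoid V :=
  ⟨sameType G, sameType_equivalence G⟩

/-- The class of the type partition corresponding to a vertex of the type graph. -/
def typeClass {V : Type*} (G : SimpleGraph V) (x : Quotient (typeSetoid G)) : Set V :=
  {v | Quotient.mk (typeSetoid G) v = x}

/-- The type graph: one vertex per class of the type partition, two distinct classes
being adjacent iff every vertex of one is adjacent to every vertex of the other. -/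
def typeGraph {V : Type*} (G : SimpleGraph V) : SimpleGraph (Quotient (typeSetoid G)) where
  Adj x y := x ≠ y ∧ ∀ u v : V,
    Quotient.mk (typeSetoid G) u = x → Quotient.mk (typeSetoid G) v = y → G.Adj u v
  symm := ⟨by
    rintro x y ⟨hxy, h⟩
    exact ⟨hxy.symm, fun u v hu hv => (h v u hv hu).symm⟩⟩
  loopless := ⟨by rintro x ⟨hxx, -⟩; exact hxx rfl⟩

/-- A base graph is one whose type partition consists only of singletons. -/
def IsBaseGraph {V : Type*} (G : SimpleGraph V) : Prop :=
  ∀ u v : V, sameType G u v → u = v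

noncomputable def itpAux : (n : ℕ) → (V : Type u) → SimpleGraph V → ℕ
  | 0, V, _ => Nat.card V
  | n + 1, V, G => if IsBaseGraph G then Nat.card V else itpAux n _ (typeGraph G)

/-- The iterated type partition number: the number of vertices of the first base graph
in the sequence `H⁰ = G`, `Hⁱ = typeGraph Hⁱ⁻¹`. -/
noncomputable def itp {V : Type u} (G : SimpleGraph V) : ℕ :=
  itpAux (Nat.card V) V G

/-- The neighborhood diversity: the number of classes of the type partition. -/
noncomputable def nd {V : Type*} (G : SimpleGraph V) : ℕ :=
  Nat.card (Quotient (typeSetoid G))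

/-- A vertex cover: a set of vertices meeting every edge. -/
def IsVertexCover {V : Type*} (G : SimpleGraph V) (C : Set V) : Prop :=
  ∀ ⦃u v⦄, G.Adj u v → u ∈ C ∨ v ∈ C

/-- The cost of a candidate vertex cover `C` with respect to the weights `w ≤ s`:
`Σ_{v ∈ C} s v + Σ_{v ∉ C} w v`. -/
noncomputable def vcCost {V : Type*} (w s : V → ℕ) (C : Set V) : ℕ :=
  (∑ᶠ v ∈ C, s v) + ∑ᶠ v ∈ Cᶜ, w v


section WVCHelpers

variable {V : Type} {H : SimpleGraph V}

lemma sameType_adj' {u v x : V} (h : sameType H u v)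
    (hadj : H.Adj u x) (hxv : x ≠ v) : H.Adj v x := by
  have hx : x ∈ H.neighborSet u \ {v} := ⟨hadj, hxv⟩
  rw [← h] at hx
  exact hx.1

lemma mk_eq_iff_sameType {a b : V} :
    Quotient.mk (typeSetoid H) a = Quotient.mk (typeSetoid H) b ↔ sameType H a b :=
  ⟨Quotient.exact, fun h => Quotient.sound (s := typeSetoid H) h⟩

lemma adj_all_of_sameType {u v : V} (huv : sameType H u v) (hadj : H.Adj u v) :
    ∀ a, sameType H u a → a ≠ u → H.Adj u a := by
  intro a hua hau
  have hva : sameType H v a :=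
    (sameType_equivalence H).trans ((sameType_equivalence H).symm huv) hua
  exact (sameType_adj' hva hadj.symm (Ne.symm hau)).symm

lemma clique_of_edge {u v : V} (huv : sameType H u v) (hadj : H.Adj u v) :
    ∀ a b, sameType H u a → sameType H u b → a ≠ b → H.Adj a b := by
  intro a b hua hub hab
  by_cases hau : a = u
  · subst hau
    exact adj_all_of_sameType huv hadj b hub (Ne.symm hab)
  · have h1 : H.Adj u a := adj_all_of_sameType huv hadj a hua hau
    have hau' : sameType H a u := (sameType_equivalence H).symm hua
    have hab' : sameType H a b := (sameType_equivalence H).trans hau' hub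
    exact adj_all_of_sameType hau' h1.symm b hab' (Ne.symm hab)

lemma adj_cross {u v a b : V} (hadj : H.Adj u v)
    (hua : sameType H u a) (hvb : sameType H v b)
    (hne1 : v ≠ a) (hne2 : a ≠ b) : H.Adj a b := by
  have h1 : H.Adj a v := sameType_adj' hua hadj hne1
  have h2 : H.Adj b a := sameType_adj' hvb h1.symm hne2
  exact h2.symm

lemma vcCost_eq_sum {α : Type} [Fintype α] (w s : α → ℕ) (D : Set α) :
    vcCost w s D = ∑ v, if v ∈ D then s v else w v := by
  classical
  rw [vcCost]
  have h1 : ∑ᶠ v ∈ D, s v = ∑ v ∈ Finset.univ.filter (fun v => v ∈ D), s v := by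
    rw [← finsum_mem_coe_finset]
    congr 1
    ext v; simp
  have h2 : ∑ᶠ v ∈ Dᶜ, w v = ∑ v ∈ Finset.univ.filter (fun v => ¬ v ∈ D), w v := by
    rw [← finsum_mem_coe_finset]
    congr 1
    ext v; simp
  rw [h1, h2, Finset.sum_ite]

/-- The finset of vertices in a type class. -/
noncomputable def classFinset (H : SimpleGraph V) [Fintype V]
    (x : Quotient (typeSetoid H)) : Finset V :=
  Finset.univ.filter (fun v => Quotient.mk (typeSetoid H) v = x)

lemma mem_classFinset [Fintype V] {x : Quotient (typeSetoid H)} {v : V} :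
    v ∈ classFinset H x ↔ Quotient.mk (typeSetoid H) v = x := by
  simp [classFinset]

lemma coe_classFinset [Fintype V] (x : Quotient (typeSetoid H)) :
    (↑(classFinset H x) : Set V) = typeClass H x := by
  ext v; simp [classFinset, typeClass]

lemma coe_classFinset_erase [Fintype V] (x : Quotient (typeSetoid H)) (v0 : V) :
    (↑((classFinset H x).erase v0) : Set V) = typeClass H x \ {v0} := by
  ext v; simp [classFinset, typeClass, Set.mem_diff, and_comm]

end WVCHelpers

/-- Correctness of the recursive step of the vertex cover algorithm: lifting an optimal
2-weighted vertex cover of the type graph gives an optimal one of `H`. -/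
theorem wvc_recursive_step {V : Type} [Fintype V] (H : SimpleGraph V)
    (hnb : ¬ IsBaseGraph H) (w s : V → ℕ)
    (hws : ∀ v, w v ≤ s v)
    (w' s' : Quotient (typeSetoid H) → ℕ)
    (hw'c : ∀ x, H.IsClique (typeClass H x) →
      w' x = sInf ((fun v => w v + ∑ᶠ u ∈ typeClass H x \ {v}, s u) '' typeClass H x))
    (hw'i : ∀ x, ¬ H.IsClique (typeClass H x) → w' x = ∑ᶠ u ∈ typeClass H x, w u)
    (hs' : ∀ x, s' x = ∑ᶠ u ∈ typeClass H x, s u)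
    (f : Quotient (typeSetoid H) → V)
    (hf1 : ∀ x, Quotient.mk (typeSetoid H) (f x) = x)
    (hf2 : ∀ x, ∀ u ∈ typeClass H x, s u - w u ≤ s (f x) - w (f x))
    (C' : Set (Quotient (typeSetoid H)))
    (hC' : IsVertexCover (typeGraph H) C' ∧
      ∀ C'' : Set (Quotient (typeSetoid H)), IsVertexCover (typeGraph H) C'' →
        vcCost w' s' C' ≤ vcCost w' s' C'')
    (C : Set V)
    (hC : C = {v | Quotient.mk (typeSetoid H) v ∈ C' ∨
      (H.IsClique (typeClass H (Quotient.mk (typeSetoid H) v)) ∧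
        Quotient.mk (typeSetoid H) v ∉ C' ∧ v ≠ f (Quotient.mk (typeSetoid H) v))}) :
    IsVertexCover H C ∧
      ∀ C2 : Set V, IsVertexCover H C2 → vcCost w s C ≤ vcCost w s C2 := by
  classical
  haveI : Fintype (Quotient (typeSetoid H)) := Quotient.fintype _
  have hfmem : ∀ x, f x ∈ classFinset H x := fun x => mem_classFinset.mpr (hf1 x)
  -- cross-class adjacency lifts to the type graph
  have hcross : ∀ u v : V, H.Adj u v →
      Quotient.mk (typeSetoid H) u ≠ Quotient.mk (typeSetoid H) v →
      (typeGraph H).Adj (Quotient.mk (typeSetoid H) u) (Quotient.mk (typeSetoid H) v) := by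
    intro u v hadj hne
    refine ⟨hne, ?_⟩
    intro a b ha hb
    have hua : sameType H u a := (sameType_equivalence H).symm (mk_eq_iff_sameType.mp ha)
    have hvb : sameType H v b := (sameType_equivalence H).symm (mk_eq_iff_sameType.mp hb)
    have hne1 : v ≠ a := by
      intro h; subst h
      exact hne ha.symm
    have hne2 : a ≠ b := by
      intro h; subst h
      exact hne (ha.symm.trans hb)
    exact adj_cross hadj hua hvb hne1 hne2
  -- a class containing an edge is a clique
  have hclqedge : ∀ u v : V, Quotient.mk (typeSetoid H) u = Quotient.mk (typeSetoid H) v →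
      H.Adj u v → H.IsClique (typeClass H (Quotient.mk (typeSetoid H) u)) := by
    intro u v hq hadj a ha b hb hab
    exact clique_of_edge (mk_eq_iff_sameType.mp hq) hadj a b
      ((sameType_equivalence H).symm (mk_eq_iff_sameType.mp ha))
      ((sameType_equivalence H).symm (mk_eq_iff_sameType.mp hb)) hab
  -- C is a vertex cover
  have hVC : IsVertexCover H C := by
    intro u v hadj
    by_cases hq : Quotient.mk (typeSetoid H) u = Quotient.mk (typeSetoid H) v
    · have hcl := hclqedge u v hq hadj
      by_cases hx : Quotient.mk (typeSetoid H) u ∈ C'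
      · left; rw [hC]; exact Or.inl hx
      · by_cases hu : u = f (Quotient.mk (typeSetoid H) u)
        · right; rw [hC]; right
          rw [← hq]
          refine ⟨hcl, hx, ?_⟩
          intro hv
          exact hadj.ne (hu.trans hv.symm)
        · left; rw [hC]; exact Or.inr ⟨hcl, hx, hu⟩
    · rcases hC'.1 (hcross u v hadj hq) with h | h
      · left; rw [hC]; exact Or.inl h
      · right; rw [hC]; exact Or.inl h
  refine ⟨hVC, ?_⟩
  -- cost machinery
  have hkey : ∀ (D : Set V), vcCost w s D =
      ∑ x, ∑ v ∈ classFinset H x, (if v ∈ D then s v else w v) := by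
    intro D
    rw [vcCost_eq_sum]
    exact (Finset.sum_fiberwise Finset.univ (fun v => Quotient.mk (typeSetoid H) v) _).symm
  have hs'F : ∀ x, s' x = ∑ v ∈ classFinset H x, s v := by
    intro x
    rw [hs' x, ← coe_classFinset x, finsum_mem_coe_finset]
  have hfinsum_erase : ∀ (x) (v0 : V), ∑ᶠ u ∈ typeClass H x \ {v0}, s u =
      ∑ u ∈ (classFinset H x).erase v0, s u := by
    intro x v0
    rw [← coe_classFinset_erase x v0, finsum_mem_coe_finset]
  have hw'cF : ∀ x, H.IsClique (typeClass H x) → ∀ v0 ∈ classFinset H x,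
      w' x ≤ w v0 + ∑ u ∈ (classFinset H x).erase v0, s u := by
    intro x hcl v0 hv0
    rw [hw'c x hcl]
    apply Nat.sInf_le
    refine ⟨v0, mem_classFinset.mp hv0, ?_⟩
    simp only
    rw [hfinsum_erase]
  have hw'fx : ∀ x, H.IsClique (typeClass H x) →
      w' x = w (f x) + ∑ u ∈ (classFinset H x).erase (f x), s u := by
    intro x hcl
    refine le_antisymm (hw'cF x hcl (f x) (hfmem x)) ?_
    rw [hw'c x hcl]
    apply le_csInf
    · exact ⟨_, ⟨f x, hf1 x, rfl⟩⟩
    · rintro b ⟨v, hv, rfl⟩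
      have hvF : v ∈ classFinset H x := mem_classFinset.mpr hv
      simp only
      rw [hfinsum_erase]
      have h1 := Finset.sum_erase_add (classFinset H x) s hvF
      have h2 := Finset.sum_erase_add (classFinset H x) s (hfmem x)
      have h3 := hf2 x v hv
      have h4 := hws v
      have h5 := hws (f x)
      omega
  have hw'iF : ∀ x, ¬ H.IsClique (typeClass H x) →
      w' x = ∑ v ∈ classFinset H x, w v := by
    intro x h
    rw [hw'i x h, ← coe_classFinset x, finsum_mem_coe_finset]
  -- cost of C equals cost of C'
  have hCeq : vcCost w s C = vcCost w' s' C' := by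
    rw [hkey C, vcCost_eq_sum]
    apply Finset.sum_congr rfl
    intro x _
    by_cases hx : x ∈ C'
    · rw [if_pos hx, hs'F x]
      apply Finset.sum_congr rfl
      intro v hv
      have hvC : v ∈ C := by
        rw [hC]; left; rw [mem_classFinset.mp hv]; exact hx
      rw [if_pos hvC]
    · rw [if_neg hx]
      by_cases hcl : H.IsClique (typeClass H x)
      · rw [hw'fx x hcl, ← Finset.sum_erase_add (classFinset H x) _ (hfmem x)]
        have hA : ∀ v ∈ (classFinset H x).erase (f x),
            (if v ∈ C then s v else w v) = s v := by
          intro v hv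
          have hvq : Quotient.mk (typeSetoid H) v = x :=
            mem_classFinset.mp (Finset.mem_of_mem_erase hv)
          have hvC : v ∈ C := by
            rw [hC]; right; rw [hvq]
            exact ⟨hcl, hx, Finset.ne_of_mem_erase hv⟩
          rw [if_pos hvC]
        have hB : (if f x ∈ C then s (f x) else w (f x)) = w (f x) := by
          have hfC : f x ∉ C := by
            rw [hC]
            simp only [Set.mem_setOf_eq, hf1 x]
            push_neg
            exact ⟨hx, fun _ _ => rfl⟩
          rw [if_neg hfC]
        rw [Finset.sum_congr rfl hA, hB, add_comm]
      · rw [hw'iF x hcl]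
        apply Finset.sum_congr rfl
        intro v hv
        have hvq := mem_classFinset.mp hv
        have hvC : v ∉ C := by
          rw [hC]
          simp only [Set.mem_setOf_eq, hvq]
          push_neg
          exact ⟨hx, fun h => absurd h hcl⟩
        rw [if_neg hvC]
  -- comparison with an arbitrary cover C2
  intro C2 hC2
  set C2' : Set (Quotient (typeSetoid H)) := {x | ∀ v ∈ classFinset H x, v ∈ C2} with hC2'def
  have hC2'VC : IsVertexCover (typeGraph H) C2' := by
    rintro x y ⟨hne, hall⟩
    by_contra hcon
    push_neg at hcon
    obtain ⟨hx, hy⟩ := hcon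
    simp only [hC2'def, Set.mem_setOf_eq, not_forall] at hx hy
    obtain ⟨u, hu, hu2⟩ := hx
    obtain ⟨v, hv, hv2⟩ := hy
    have hadj : H.Adj u v := hall u v (mem_classFinset.mp hu) (mem_classFinset.mp hv)
    rcases hC2 hadj with h | h
    · exact hu2 h
    · exact hv2 h
  have hle : vcCost w' s' C2' ≤ vcCost w s C2 := by
    rw [hkey C2, vcCost_eq_sum]
    apply Finset.sum_le_sum
    intro x _
    by_cases hx : x ∈ C2'
    · rw [if_pos hx, hs'F x]
      apply Finset.sum_le_sum
      intro v hv
      rw [if_pos (hx v hv)]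
    · rw [if_neg hx]
      have hx' : ∃ v0 ∈ classFinset H x, v0 ∉ C2 := by
        by_contra hcon
        push_neg at hcon
        exact hx (fun v hv => hcon v hv)
      obtain ⟨v0, hv0F, hv0⟩ := hx'
      by_cases hcl : H.IsClique (typeClass H x)
      · refine le_trans (hw'cF x hcl v0 hv0F) (le_of_eq ?_)
        rw [← Finset.sum_erase_add (classFinset H x) _ hv0F]
        have hA : ∀ v ∈ (classFinset H x).erase v0,
            (if v ∈ C2 then s v else w v) = s v := by
          intro v hv
          have hvne := Finset.ne_of_mem_erase hv
          have hvF := Finset.mem_of_mem_erase hv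
          have hadj : H.Adj v v0 := hcl (mem_classFinset.mp hvF)
            (mem_classFinset.mp hv0F) hvne
          rcases hC2 hadj with h | h
          · rw [if_pos h]
          · exact absurd h hv0
        rw [Finset.sum_congr rfl hA, if_neg hv0, add_comm]
      · rw [hw'iF x hcl]
        apply Finset.sum_le_sum
        intro v _
        split_ifs with h
        · exact hws v
        · exact le_refl _
  calc vcCost w s C = vcCost w' s' C' := hCeq
    _ ≤ vcCost w' s' C2' := hC'.2 C2' hC2'VC
    _ ≤ vcCost w s C2 := hle
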